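/- Suppose G is local with respect to a neighborhood map N : ι → Set ι, i.e. G_i(x) = G_i(y) whenever the states x and y agree on all components in N(i), and suppose N(i) ∩ F = ∅ for every i ∈ C. Then the LTS2 step with M = 1 coincides, in every component i ∈ ι, with one global SSPRK2 step with step Δt applied to the full system: x^new = (1/2)x⁰ + (1/2)y₁ + (1/2)Δt·G(y₁), where y₁ = x⁰ + Δt·G(x⁰). -/
import Mathlib


open scoped Classical

/-- The substepping recursion of one LTS2 step. Starting from the state `x0`, the
first-stage vector `x1`, coarse step `Δt` and substep count `M`, it returns the triple
`(a^k, P^k, Q^k)`: the fine solution after `k` substeps (meaningful on `F`), and the two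
accumulated interface correction terms (meaningful on `I₁ ∪ I₂`). -/
noncomputable def lts2Sub {ι : Type*} (F I₁ : Set ι)
    (G : (ι → ℝ) → ι → ℝ) (Δt : ℝ) (M : ℕ) (x0 x1 : ι → ℝ) :
    ℕ → ((ι → ℝ) × (ι → ℝ) × (ι → ℝ))
  | 0 => (x0, fun _ => 0, fun _ => 0)
  | k + 1 =>
    let s := lts2Sub F I₁ G Δt M x0 x1 k
    let a := s.1
    let P := s.2.1
    let Q := s.2.2
    -- v^k: a^k on F, the α-interpolant on I₁, x⁰ on I₂ ∪ C
    let v : ι → ℝ := fun i =>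
      if i ∈ F then a i
      else if i ∈ I₁ then (1 - (k : ℝ) / M) * x0 i + ((k : ℝ) / M) * x1 i
      else x0 i
    -- b^k = v^k + (Δt/M)·G(v^k) (used on F)
    let b : ι → ℝ := fun i => v i + (Δt / M) * G v i
    -- w^k: b^k on F, the β-interpolant on I₁, x¹ on I₂ ∪ C
    let w : ι → ℝ := fun i =>
      if i ∈ F then b i
      else if i ∈ I₁ then
        (1 - ((k : ℝ) + 1) / M) * x0 i + (((k : ℝ) + 1) / M) * x1 i
      else x1 i
    (fun i => (1 / 2) * a i + (1 / 2) * b i + (1 / 2) * (Δt / M) * G w i,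
     fun i => P i + G v i,
     fun i => Q i + G w i)

/-- One step of the second-order local time-stepping scheme LTS2, with fine region `F`,
interface regions `I₁`, `I₂`, coarse region `C`, right-hand side `G`, coarse step `Δt`
and `M` fine substeps per coarse step. -/
noncomputable def lts2Step {ι : Type*} (F I₁ I₂ C : Set ι)
    (G : (ι → ℝ) → ι → ℝ) (Δt : ℝ) (M : ℕ) (x0 : ι → ℝ) : ι → ℝ :=
  -- x¹ = x⁰ + Δt·G(x⁰) on I₁ ∪ I₂ ∪ C, and x¹ = x⁰ on F
  let x1 : ι → ℝ := fun i => if i ∈ F then x0 i else x0 i + Δt * G x0 i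
  -- x² = (1/2)x⁰ + (1/2)x¹ + (1/2)Δt·G(x¹) (used on C)
  let x2 : ι → ℝ := fun i =>
    (1 / 2) * x0 i + (1 / 2) * x1 i + (1 / 2) * Δt * G x1 i
  let s := lts2Sub F I₁ G Δt M x0 x1 M
  fun i =>
    if i ∈ F then s.1 i
    else if i ∈ C then x2 i
    else x0 i + (Δt / M) * ((1 / 2) * s.2.1 i + (1 / 2) * s.2.2 i)

/-- If `G` is local with respect to a neighborhood map `N` and the coarse cells see no
fine cells (`N(i) ∩ F = ∅` for `i ∈ C`), then the LTS2 step with `M = 1` coincides, in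
every component, with one global SSPRK2 step with step `Δt` applied to the full
system. -/
theorem lts2_M_eq_one_is_ssprk2 {ι : Type*} [Fintype ι]
    (F I₁ I₂ C : Set ι)
    (hcover : ∀ i : ι, i ∈ F ∨ i ∈ I₁ ∨ i ∈ I₂ ∨ i ∈ C)
    (hFI₁ : F ∩ I₁ = ∅) (hFI₂ : F ∩ I₂ = ∅) (hFC : F ∩ C = ∅)
    (hI₁I₂ : I₁ ∩ I₂ = ∅) (hI₁C : I₁ ∩ C = ∅) (hI₂C : I₂ ∩ C = ∅)
    (G : (ι → ℝ) → ι → ℝ) (Δt : ℝ)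
    (N : ι → Set ι)
    (hlocal : ∀ (i : ι) (x y : ι → ℝ), (∀ j ∈ N i, x j = y j) → G x i = G y i)
    (hNC : ∀ i ∈ C, N i ∩ F = ∅)
    (x0 : ι → ℝ) :
    ∀ i : ι, lts2Step F I₁ I₂ C G Δt 1 x0 i =
      (1 / 2) * x0 i + (1 / 2) * (x0 i + Δt * G x0 i) +
        (1 / 2) * Δt * G (fun j => x0 j + Δt * G x0 j) i := by
  intro i
  set y1 : ι → ℝ := fun j => x0 j + Δt * G x0 j with hy1
  set x1 : ι → ℝ := fun j => if j ∈ F then x0 j else x0 j + Δt * G x0 j with hx1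
  have hv : (fun j : ι =>
      if j ∈ F then x0 j
      else if j ∈ I₁ then (1 - (0 : ℝ) / 1) * x0 j + ((0 : ℝ) / 1) * x1 j
      else x0 j) = x0 := by
    funext j
    by_cases hj : j ∈ F
    · simp [hj]
    · by_cases hj1 : j ∈ I₁ <;> simp [hj, hj1]
  have hvv : ∀ j : ι,
      (if j ∈ F then x0 j
       else if j ∈ I₁ then (1 - (0 : ℝ) / 1) * x0 j + ((0 : ℝ) / 1) * x1 j
       else x0 j) = x0 j := fun j => congrFun hv j
  have hGv : G (fun j : ι =>
      if j ∈ F then x0 j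
      else if j ∈ I₁ then (1 - (0 : ℝ) / 1) * x0 j + ((0 : ℝ) / 1) * x1 j
      else x0 j) = G x0 := congrArg G hv
  have hw : (fun j : ι =>
      if j ∈ F then
        (if j ∈ F then x0 j
         else if j ∈ I₁ then (1 - (0 : ℝ) / 1) * x0 j + ((0 : ℝ) / 1) * x1 j
         else x0 j) + (Δt / (1 : ℝ)) * G x0 j
      else if j ∈ I₁ then (1 - ((0 : ℝ) + 1) / 1) * x0 j + (((0 : ℝ) + 1) / 1) * x1 j
      else x1 j) = y1 := by
    funext j
    by_cases hjF : j ∈ F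
    · simp [hjF, hy1]
    · by_cases hjI : j ∈ I₁ <;> simp [hjF, hjI, hx1, hy1]
  have hx1y1 : ∀ j, j ∉ F → x1 j = y1 j := by
    intro j hj; simp [hx1, hy1, hj]
  have hsub : lts2Sub F I₁ G Δt 1 x0 x1 1 =
      ((fun j => (1 / 2) * x0 j + (1 / 2) * y1 j + (1 / 2) * Δt * G y1 j),
       (fun j => G x0 j), (fun j => G y1 j)) := by
    have ha0 : (lts2Sub F I₁ G Δt 1 x0 x1 0).1 = x0 := rfl
    have hP0 : (lts2Sub F I₁ G Δt 1 x0 x1 0).2.1 = fun _ => (0 : ℝ) := rfl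
    have hQ0 : (lts2Sub F I₁ G Δt 1 x0 x1 0).2.2 = fun _ => (0 : ℝ) := rfl
    refine Prod.ext ?_ (Prod.ext ?_ ?_)
    · funext j
      show (1 / 2) * (lts2Sub F I₁ G Δt 1 x0 x1 0).1 j + _ + _ = _
      simp only [Nat.cast_zero, Nat.cast_one, ha0]
      rw [hGv, hw, hvv j, hy1]
      ring
    · funext j
      show (lts2Sub F I₁ G Δt 1 x0 x1 0).2.1 j + _ = _
      simp only [Nat.cast_zero, Nat.cast_one, ha0, hP0]
      rw [hGv]
      ring
    · funext j
      show (lts2Sub F I₁ G Δt 1 x0 x1 0).2.2 j + _ = _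
      simp only [Nat.cast_zero, Nat.cast_one, ha0, hQ0]
      rw [hGv, hw]
      ring
  show (if i ∈ F then (lts2Sub F I₁ G Δt 1 x0 x1 1).1 i
      else if i ∈ C then
        (1 / 2) * x0 i + (1 / 2) * x1 i + (1 / 2) * Δt * G x1 i
      else x0 i + (Δt / (1 : ℕ)) *
        ((1 / 2) * (lts2Sub F I₁ G Δt 1 x0 x1 1).2.1 i +
         (1 / 2) * (lts2Sub F I₁ G Δt 1 x0 x1 1).2.2 i)) = _
  rw [hsub]
  by_cases hiF : i ∈ F
  · simp [hiF, hy1]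
  · by_cases hiC : i ∈ C
    · have hx1i : x1 i = y1 i := hx1y1 i hiF
      have hGx1 : G x1 i = G y1 i := by
        refine hlocal i x1 y1 fun j hj => ?_
        refine hx1y1 j fun hjF => ?_
        have hmem : j ∈ N i ∩ F := ⟨hj, hjF⟩
        rw [hNC i hiC] at hmem
        exact hmem
      simp only [hiF, hiC, if_false, if_true]
      rw [hx1i, hGx1, hy1]
    · simp only [hiF, hiC, if_false]
      simp [hy1]
      ring
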